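/- arXiv:2209.14081 — 4 statements merged into one kernel-verified Lean document; each statement's English description precedes it below -/
import Mathlib

section
/- For every positive integer n̂, the forward difference of T_c satisfies ΔT_c(n̂) = α(n̂) + 1 − Σ_{i=1}^{n̂} p_T(i) − c·(1 − Σ_{i=1}^{⌊c·n̂⌋} p_T(i)), where α(n̂) = (c(n̂+1) − ⌊c(n̂+1)⌋) · p_T(⌊c(n̂+1)⌋) · (⌊c(n̂+1)⌋ − ⌊c·n̂⌋). -/
/-- The pmf `p(i | n̂)` obtained by truncating the triggering probabilities `p_T` at `n̂`. -/
noncomputable def pcond (pT : ℕ → ℝ) (nh i : ℕ) : ℝ :=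
  if 0 < i ∧ i < nh then pT i
  else if i = nh then 1 - ∑ j ∈ Finset.Ico 1 nh, pT j
  else 0

/-- `T_c(n̂) = E[max(n − c·n̂, 0)]` when `n` has pmf `p(· | n̂)`. -/
noncomputable def Tc (c : ℝ) (pT : ℕ → ℝ) (nh : ℕ) : ℝ :=
  ∑ i ∈ Finset.Icc 1 nh, max ((i : ℝ) - c * nh) 0 * pcond pT nh i

lemma Tc_closed (c : ℝ) (hc : c ∈ Set.Ioo (0 : ℝ) 1) (pT : ℕ → ℝ) (nh : ℕ) (hnh : 0 < nh) :
    Tc c pT nh = (∑ i ∈ Finset.Icc 1 nh, max ((i : ℝ) - c * nh) 0 * pT i)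
      + (1 - c) * nh * (1 - ∑ i ∈ Finset.Icc 1 nh, pT i) := by
  unfold Tc
  have hpc : ∀ i ∈ Finset.Icc 1 nh, max ((i : ℝ) - c * nh) 0 * pcond pT nh i
      = max ((i : ℝ) - c * nh) 0 * pT i
        + (if i = nh then max ((i : ℝ) - c * nh) 0 * (1 - ∑ j ∈ Finset.Icc 1 nh, pT j) else 0) := by
    intro i hi
    rw [Finset.mem_Icc] at hi
    rcases eq_or_lt_of_le hi.2 with h | h
    · subst h
      have hs : ∑ j ∈ Finset.Icc 1 i, pT j = ∑ j ∈ Finset.Ico 1 i, pT j + pT i := by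
        rw [show Finset.Icc 1 i = Finset.Ico 1 (i + 1) by rw [Finset.Ico_add_one_right_eq_Icc]]
        exact Finset.sum_Ico_succ_top hi.1 _
      simp only [pcond, lt_irrefl, and_false, if_false, if_pos rfl, hs, if_true]
      ring
    · have h1 : pcond pT nh i = pT i := by
        simp only [pcond, if_pos (⟨hi.1, h⟩ : 0 < i ∧ i < nh)]
      rw [h1, if_neg (by omega)]
      ring
  rw [Finset.sum_congr rfl hpc, Finset.sum_add_distrib, Finset.sum_ite_eq' (Finset.Icc 1 nh)]
  rw [if_pos (by rw [Finset.mem_Icc]; omega)]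
  have hmax : max ((nh : ℝ) - c * nh) 0 = (1 - c) * nh := by
    rw [max_eq_left]
    · ring
    · have hn : (0 : ℝ) < nh := by exact_mod_cast hnh
      nlinarith [hc.2]
  rw [hmax]

lemma G_closed (c : ℝ) (hc : c ∈ Set.Ioo (0 : ℝ) 1) (pT : ℕ → ℝ) (nh : ℕ) :
    ∑ i ∈ Finset.Icc 1 nh, max ((i : ℝ) - c * nh) 0 * pT i
      = ∑ i ∈ Finset.Ioc ⌊c * (nh : ℝ)⌋₊ nh, ((i : ℝ) - c * nh) * pT i := by
  have hx : (0 : ℝ) ≤ c * nh := mul_nonneg hc.1.le (Nat.cast_nonneg nh)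
  have hm : ⌊c * (nh : ℝ)⌋₊ ≤ nh := by
    have hle : c * (nh : ℝ) ≤ (nh : ℝ) := by
      have : (0 : ℝ) ≤ (nh : ℝ) := Nat.cast_nonneg nh
      nlinarith [hc.2]
    calc ⌊c * (nh : ℝ)⌋₊ ≤ ⌊(nh : ℝ)⌋₊ := Nat.floor_le_floor hle
      _ = nh := Nat.floor_natCast nh
  rw [show Finset.Icc 1 nh = Finset.Ioc 0 nh from Finset.Icc_add_one_left_eq_Ioc 0 nh]
  rw [← Finset.sum_Ioc_consecutive _ (Nat.zero_le ⌊c * (nh : ℝ)⌋₊) hm]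
  have h1 : ∑ i ∈ Finset.Ioc 0 ⌊c * (nh : ℝ)⌋₊, max ((i : ℝ) - c * nh) 0 * pT i = 0 := by
    apply Finset.sum_eq_zero
    intro i hi
    rw [Finset.mem_Ioc] at hi
    have hle : (i : ℝ) ≤ c * nh := (Nat.le_floor_iff hx).mp hi.2
    rw [max_eq_right (by linarith), zero_mul]
  rw [h1, zero_add]
  apply Finset.sum_congr rfl
  intro i hi
  rw [Finset.mem_Ioc] at hi
  have hlt : c * nh < i := by
    have := hi.1
    rw [Nat.floor_lt hx] at this
    exact this
  rw [max_eq_left (by linarith)]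

/-- The forward difference `ΔT_c(n̂) = T_c(n̂+1) − T_c(n̂)` equals
`α(n̂) + 1 − Σ_{i=1}^{n̂} p_T(i) − c·(1 − Σ_{i=1}^{⌊c·n̂⌋} p_T(i))`. -/
theorem forward_difference_Tc (c : ℝ) (hc : c ∈ Set.Ioo (0 : ℝ) 1)
    (pT : ℕ → ℝ) (hpT0 : pT 0 = 0) (hpos : ∀ i, 0 ≤ pT i) (hsum : HasSum pT 1) :
    ∀ nh : ℕ, 0 < nh →
      Tc c pT (nh + 1) - Tc c pT nh =
        (c * ((nh : ℝ) + 1) - (⌊c * ((nh : ℝ) + 1)⌋₊ : ℝ)) * pT ⌊c * ((nh : ℝ) + 1)⌋₊ *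
            ((⌊c * ((nh : ℝ) + 1)⌋₊ : ℝ) - (⌊c * (nh : ℝ)⌋₊ : ℝ))
          + 1 - ∑ i ∈ Finset.Icc 1 nh, pT i
          - c * (1 - ∑ i ∈ Finset.Icc 1 ⌊c * (nh : ℝ)⌋₊, pT i) := by
  intro nh hnh
  obtain ⟨hc0, hc1⟩ := hc
  have hncast : ((nh + 1 : ℕ) : ℝ) = (nh : ℝ) + 1 := by push_cast; ring
  set m := ⌊c * (nh : ℝ)⌋₊ with hm_def
  set m' := ⌊c * ((nh : ℝ) + 1)⌋₊ with hm'_def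
  have hnn : (0 : ℝ) ≤ (nh : ℝ) := Nat.cast_nonneg nh
  have hx : (0 : ℝ) ≤ c * nh := by positivity
  have hx' : (0 : ℝ) ≤ c * ((nh : ℝ) + 1) := by positivity
  -- m < nh
  have hm_lt : m < nh := by
    rw [hm_def, Nat.floor_lt hx]
    have hnpos : (0 : ℝ) < (nh : ℝ) := by exact_mod_cast hnh
    nlinarith
  -- m' ≤ nh
  have hm'_le : m' ≤ nh := by
    have : m' < nh + 1 := by
      rw [hm'_def, Nat.floor_lt hx']
      push_cast
      nlinarith
    omega
  -- m ≤ m'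
  have hmm' : m ≤ m' := by
    apply Nat.floor_le_floor
    nlinarith
  -- m' ≤ m + 1
  have hm'm : m' ≤ m + 1 := by
    have h1 : c * ((nh : ℝ) + 1) ≤ c * nh + 1 := by nlinarith
    calc m' ≤ ⌊c * (nh : ℝ) + 1⌋₊ := Nat.floor_le_floor h1
      _ = m + 1 := by rw [Nat.floor_add_one hx]
  -- Closed forms
  have hTc1 := Tc_closed c ⟨hc0, hc1⟩ pT (nh + 1) (by omega)
  have hTc2 := Tc_closed c ⟨hc0, hc1⟩ pT nh hnh
  have hG1 := G_closed c ⟨hc0, hc1⟩ pT (nh + 1)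
  have hG2 := G_closed c ⟨hc0, hc1⟩ pT nh
  rw [hG1] at hTc1
  rw [hG2] at hTc2
  rw [hTc1, hTc2]
  have hfloor_eq : ⌊c * ((nh + 1 : ℕ) : ℝ)⌋₊ = m' := by rw [hncast]
  rw [hfloor_eq]
  -- split off the top term of the Ioc m' (nh+1) sum via intermediate sums
  have hA : ∑ i ∈ Finset.Ioc m m', ((i : ℝ) - c * ((nh + 1 : ℕ) : ℝ)) * pT i
      + ∑ i ∈ Finset.Ioc m' (nh + 1), ((i : ℝ) - c * ((nh + 1 : ℕ) : ℝ)) * pT i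
      = ∑ i ∈ Finset.Ioc m (nh + 1), ((i : ℝ) - c * ((nh + 1 : ℕ) : ℝ)) * pT i :=
    Finset.sum_Ioc_consecutive _ hmm' (by omega)
  have halpha : ∑ i ∈ Finset.Ioc m m', ((i : ℝ) - c * ((nh + 1 : ℕ) : ℝ)) * pT i
      = -((c * ((nh : ℝ) + 1) - (m' : ℝ)) * pT m' * ((m' : ℝ) - (m : ℝ))) := by
    rcases (by omega : m' = m ∨ m' = m + 1) with h | h
    · rw [h, Finset.Ioc_self, Finset.sum_empty]
      ring
    · rw [h, show Finset.Ioc m (m + 1) = {m + 1} from by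
        rw [← Finset.Icc_add_one_left_eq_Ioc, Finset.Icc_self], Finset.sum_singleton]
      push_cast
      ring
  have hC : ∑ i ∈ Finset.Ioc m (nh + 1), ((i : ℝ) - c * ((nh + 1 : ℕ) : ℝ)) * pT i
      = ∑ i ∈ Finset.Ioc m nh, ((i : ℝ) - c * ((nh + 1 : ℕ) : ℝ)) * pT i
        + (((nh + 1 : ℕ) : ℝ) - c * ((nh + 1 : ℕ) : ℝ)) * pT (nh + 1) :=
    Finset.sum_Ioc_succ_top (by omega) _
  have hD : ∑ i ∈ Finset.Ioc m nh, ((i : ℝ) - c * ((nh + 1 : ℕ) : ℝ)) * pT i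
      = ∑ i ∈ Finset.Ioc m nh, ((i : ℝ) - c * (nh : ℝ)) * pT i
        - c * ∑ i ∈ Finset.Ioc m nh, pT i := by
    rw [Finset.mul_sum, ← Finset.sum_sub_distrib]
    apply Finset.sum_congr rfl
    intro i _
    push_cast
    ring
  have hE : ∑ i ∈ Finset.Ioc m nh, pT i
      = ∑ i ∈ Finset.Icc 1 nh, pT i - ∑ i ∈ Finset.Icc 1 m, pT i := by
    have h := Finset.sum_Ioc_consecutive pT (Nat.zero_le m) hm_lt.le
    rw [show Finset.Ioc 0 m = Finset.Icc 1 m from (Finset.Icc_add_one_left_eq_Ioc 0 m).symm,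
        show Finset.Ioc 0 nh = Finset.Icc 1 nh from (Finset.Icc_add_one_left_eq_Ioc 0 nh).symm] at h
    linarith
  have hF : ∑ i ∈ Finset.Icc 1 (nh + 1), pT i
      = ∑ i ∈ Finset.Icc 1 nh, pT i + pT (nh + 1) := by
    rw [show Finset.Icc 1 (nh + 1) = Finset.Ico 1 (nh + 2) from (Finset.Ico_add_one_right_eq_Icc 1 (nh + 1)).symm]
    rw [Finset.sum_Ico_succ_top (by omega), Finset.Ico_add_one_right_eq_Icc]
  have hsum_eq : ∑ i ∈ Finset.Ioc m' (nh + 1), ((i : ℝ) - c * ((nh + 1 : ℕ) : ℝ)) * pT i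
      = (c * ((nh : ℝ) + 1) - (m' : ℝ)) * pT m' * ((m' : ℝ) - (m : ℝ))
        + ∑ i ∈ Finset.Ioc m nh, ((i : ℝ) - c * (nh : ℝ)) * pT i
        - c * (∑ i ∈ Finset.Icc 1 nh, pT i - ∑ i ∈ Finset.Icc 1 m, pT i)
        + (((nh + 1 : ℕ) : ℝ) - c * ((nh + 1 : ℕ) : ℝ)) * pT (nh + 1) := by
    rw [← hE]
    linarith [hA, halpha, hC, hD]
  rw [hsum_eq, hF]
  push_cast
  ring
end

section
/- For every positive integer n̂, the following identity holds for the first sum appearing in the expansion of T_c(n̂+1): Σ_{i=⌊c(n̂+1)⌋+1}^{n̂+1} i · p(i | n̂+1) = Σ_{i=⌊c·n̂⌋+1}^{n̂} i · p(i | n̂) + 1 − Σ_{i=1}^{n̂} p_T(i) − ⌊c(n̂+1)⌋ · p_T(⌊c(n̂+1)⌋) · (⌊c(n̂+1)⌋ − ⌊c·n̂⌋). -/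
/-- The identity for the first sum `Σ_{i>c(n̂+1)}^{n̂+1} i·p(i | n̂+1)` appearing in the
expansion of `T_c(n̂+1)`. -/
theorem first_sum_identity (c : ℝ) (hc : c ∈ Set.Ioo (0 : ℝ) 1)
    (pT : ℕ → ℝ) (hpT0 : pT 0 = 0) (hpos : ∀ i, 0 ≤ pT i) (hsum : HasSum pT 1) :
    ∀ nh : ℕ, 0 < nh →
      ∑ i ∈ Finset.Icc (⌊c * ((nh : ℝ) + 1)⌋₊ + 1) (nh + 1), (i : ℝ) * pcond pT (nh + 1) i =
        ∑ i ∈ Finset.Icc (⌊c * (nh : ℝ)⌋₊ + 1) nh, (i : ℝ) * pcond pT nh i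
          + 1 - ∑ i ∈ Finset.Icc 1 nh, pT i
          - (⌊c * ((nh : ℝ) + 1)⌋₊ : ℝ) * pT ⌊c * ((nh : ℝ) + 1)⌋₊ *
              ((⌊c * ((nh : ℝ) + 1)⌋₊ : ℝ) - (⌊c * (nh : ℝ)⌋₊ : ℝ)) := by
  obtain ⟨hc0, hc1⟩ := hc
  intro nh hnh
  obtain ⟨n, rfl⟩ : ∃ n, nh = n + 1 := ⟨nh - 1, (Nat.succ_pred_eq_of_pos hnh).symm⟩
  -- generic splitting of the truncated sum
  have key : ∀ a N : ℕ, 1 ≤ a → a ≤ N + 1 →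
      ∑ i ∈ Finset.Icc a (N + 1), (i : ℝ) * pcond pT (N + 1) i =
        (∑ i ∈ Finset.Icc a N, (i : ℝ) * pT i)
          + ((N : ℝ) + 1) * (1 - ∑ j ∈ Finset.Icc 1 N, pT j) := by
    intro a N ha haN
    rw [Finset.sum_Icc_succ_top haN]
    congr 1
    · apply Finset.sum_congr rfl
      intro i hi
      simp only [Finset.mem_Icc] at hi
      have : 0 < i ∧ i < N + 1 := ⟨by omega, by omega⟩
      simp [pcond, this]
    · have hpc : pcond pT (N + 1) (N + 1) = 1 - ∑ j ∈ Finset.Icc 1 N, pT j := by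
        simp [pcond, Finset.Ico_add_one_right_eq_Icc]
      rw [hpc]
      push_cast
      ring
  -- basic floor facts
  set M := ⌊c * ((↑(n + 1) : ℝ) + 1)⌋₊ with hMdef
  set K := ⌊c * ((↑(n + 1) : ℝ))⌋₊ with hKdef
  have hn1 : (0:ℝ) < (↑(n + 1) : ℝ) := by positivity
  have hM : M ≤ n + 1 := by
    have h2 : c * ((↑(n + 1) : ℝ) + 1) < ((n + 2 : ℕ) : ℝ) := by push_cast; nlinarith
    have := (Nat.floor_lt (by positivity)).mpr h2
    omega
  have hK : K ≤ n := by
    have h2 : c * ((↑(n + 1) : ℝ)) < ((n + 1 : ℕ) : ℝ) := by push_cast; nlinarith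
    have := (Nat.floor_lt (by positivity)).mpr h2
    omega
  have hKM : K ≤ M := Nat.floor_le_floor (by nlinarith)
  have hMK : M ≤ K + 1 := by
    have h1 : c * ((↑(n + 1) : ℝ) + 1) ≤ c * ((↑(n + 1) : ℝ)) + 1 := by nlinarith
    calc M ≤ ⌊c * ((↑(n + 1) : ℝ)) + 1⌋₊ := Nat.floor_le_floor h1
      _ = K + 1 := Nat.floor_add_one (by positivity)
  clear_value M K
  -- rewrite both truncated sums
  rw [key (M + 1) (n + 1) (by omega) (by omega), key (K + 1) n (by omega) (by omega)]
  have hS : ∑ j ∈ Finset.Icc 1 (n + 1), pT j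
      = (∑ j ∈ Finset.Icc 1 n, pT j) + pT (n + 1) :=
    Finset.sum_Icc_succ_top (by omega) _
  have hbot : ∀ (a b : ℕ) (f : ℕ → ℝ), a ≤ b →
      ∑ i ∈ Finset.Icc a b, f i = f a + ∑ i ∈ Finset.Icc (a + 1) b, f i := by
    intro a b f hab
    rw [Finset.Icc_eq_cons_Ioc hab, Finset.sum_cons, ← Finset.Icc_add_one_left_eq_Ioc]
  set S := ∑ j ∈ Finset.Icc 1 n, pT j with hSdef
  have hcase : M = K ∨ M = K + 1 := by omega
  rcases hcase with h | h <;> rw [h]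
  · -- M = K
    rw [Finset.sum_Icc_succ_top (by omega : K + 1 ≤ n + 1), hS]
    push_cast
    ring
  · -- M = K + 1
    rcases eq_or_lt_of_le hK with h' | h'
    · -- K = n : both interval sums empty
      have e1 : Finset.Icc (K + 1 + 1) (n + 1) = ∅ := Finset.Icc_eq_empty (by omega)
      have e2 : Finset.Icc (K + 1) n = ∅ := Finset.Icc_eq_empty (by omega)
      rw [e1, e2, hS]
      simp only [Finset.sum_empty]
      subst h'
      push_cast
      ring
    · -- K < n
      rw [Finset.sum_Icc_succ_top (by omega : K + 1 + 1 ≤ n + 1),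
        hbot (K + 1) n _ (by omega), hS]
      push_cast
      ring
end

section
/- For every positive integer n̂, the following identity holds for the second sum appearing in the expansion of T_c(n̂+1): Σ_{i=⌊c(n̂+1)⌋+1}^{n̂+1} c(n̂+1) · p(i | n̂+1) = Σ_{i=⌊c·n̂⌋+1}^{n̂} c·n̂ · p(i | n̂) + c − c·Σ_{i=1}^{⌊c·n̂⌋} p_T(i) − c(n̂+1) · p_T(⌊c(n̂+1)⌋) · (⌊c(n̂+1)⌋ − ⌊c·n̂⌋). -/
lemma sum_pcond_tail (pT : ℕ → ℝ) {nh k : ℕ} (hk : k < nh) :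
    ∑ i ∈ Finset.Icc (k + 1) nh, pcond pT nh i = 1 - ∑ i ∈ Finset.Icc 1 k, pT i := by
  have h1 : Finset.Icc (k + 1) nh = Finset.Ico (k + 1) (nh + 1) :=
    (Finset.Ico_add_one_right_eq_Icc _ _).symm
  rw [h1, Finset.sum_Ico_succ_top (by omega : k + 1 ≤ nh)]
  have h2 : ∀ i ∈ Finset.Ico (k + 1) nh, pcond pT nh i = pT i := by
    intro i hi
    simp only [Finset.mem_Ico] at hi
    simp [pcond, (by omega : 0 < i), hi.2]
  rw [Finset.sum_congr rfl h2]
  have h3 : pcond pT nh nh = 1 - ∑ j ∈ Finset.Ico 1 nh, pT j := by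
    simp [pcond]
  rw [h3]
  have h4 : ∑ j ∈ Finset.Ico 1 nh, pT j
      = ∑ j ∈ Finset.Ico 1 (k + 1), pT j + ∑ j ∈ Finset.Ico (k + 1) nh, pT j :=
    (Finset.sum_Ico_consecutive _ (by omega) (by omega)).symm
  have h5 : Finset.Ico 1 (k + 1) = Finset.Icc 1 k := Finset.Ico_add_one_right_eq_Icc _ _
  rw [h4, h5]; ring

/-- The identity for the second sum `Σ_{i>c(n̂+1)}^{n̂+1} c(n̂+1)·p(i | n̂+1)` appearing in the
expansion of `T_c(n̂+1)`. -/
theorem second_sum_identity (c : ℝ) (hc : c ∈ Set.Ioo (0 : ℝ) 1)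
    (pT : ℕ → ℝ) (hpT0 : pT 0 = 0) (hpos : ∀ i, 0 ≤ pT i) (hsum : HasSum pT 1) :
    ∀ nh : ℕ, 0 < nh →
      ∑ i ∈ Finset.Icc (⌊c * ((nh : ℝ) + 1)⌋₊ + 1) (nh + 1),
          c * ((nh : ℝ) + 1) * pcond pT (nh + 1) i =
        ∑ i ∈ Finset.Icc (⌊c * (nh : ℝ)⌋₊ + 1) nh, c * (nh : ℝ) * pcond pT nh i
          + c - c * ∑ i ∈ Finset.Icc 1 ⌊c * (nh : ℝ)⌋₊, pT i
          - c * ((nh : ℝ) + 1) * pT ⌊c * ((nh : ℝ) + 1)⌋₊ *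
              ((⌊c * ((nh : ℝ) + 1)⌋₊ : ℝ) - (⌊c * (nh : ℝ)⌋₊ : ℝ)) := by
  intro nh hnh
  obtain ⟨hc0, hc1⟩ := hc
  set m := ⌊c * (nh : ℝ)⌋₊ with hm
  set m' := ⌊c * ((nh : ℝ) + 1)⌋₊ with hm'
  have hnhR : (0 : ℝ) < nh := by exact_mod_cast hnh
  have hmlt : m < nh := by
    rw [hm, Nat.floor_lt (by positivity)]
    calc c * (nh : ℝ) < 1 * nh := by nlinarith
    _ = nh := one_mul _
  have hm'le : m' < nh + 1 := by
    rw [hm', Nat.floor_lt (by positivity)]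
    push_cast
    nlinarith
  have hmm' : m ≤ m' := Nat.floor_le_floor (by nlinarith)
  have hm'm : m' ≤ m + 1 := by
    have h1 : c * ((nh : ℝ) + 1) < m + 2 := by
      have := Nat.lt_floor_add_one (c * (nh : ℝ))
      push_cast
      nlinarith
    have := (Nat.floor_lt (by positivity)).2 (by push_cast; linarith : c * ((nh:ℝ)+1) < ((m + 2 : ℕ) : ℝ))
    omega
  rw [← Finset.mul_sum, ← Finset.mul_sum,
    sum_pcond_tail pT (show m' < nh + 1 from hm'le),
    sum_pcond_tail pT hmlt]
  have key : ∑ i ∈ Finset.Icc 1 m', pT i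
      = ∑ i ∈ Finset.Icc 1 m, pT i + pT m' * ((m' : ℝ) - (m : ℝ)) := by
    have hcases : m' = m ∨ m' = m + 1 := by omega
    rcases hcases with h | h
    · rw [h]; simp
    · rw [h, Finset.sum_Icc_succ_top (by omega : 1 ≤ m + 1)]
      push_cast; ring
  rw [key]
  ring
end

section
/- For every positive integer n̂, the forward difference of T_c is bounded below by ΔT_c(n̂) ≥ 1 − Σ_{i=1}^{n̂} p_T(i) − c. In particular, if Σ_{i=1}^{n̂} p_T(i) ≤ 1 − c then T_c(n̂+1) ≥ T_c(n̂). -/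
lemma max_sub_le (x c : ℝ) (hc : 0 ≤ c) : max x 0 - c ≤ max (x - c) 0 := by
  rcases max_cases x 0 with ⟨h1, h2⟩ | ⟨h1, h2⟩ <;>
    rcases max_cases (x - c) 0 with ⟨h3, h4⟩ | ⟨h3, h4⟩ <;> linarith

lemma Tc_eq (c : ℝ) (pT : ℕ → ℝ) (nh : ℕ) (h : 0 < nh) :
    Tc c pT nh = (∑ i ∈ Finset.Ico 1 nh, max ((i : ℝ) - c * nh) 0 * pT i)
      + max ((nh : ℝ) - c * nh) 0 * (1 - ∑ j ∈ Finset.Ico 1 nh, pT j) := by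
  unfold Tc
  rw [← Finset.Ico_add_one_right_eq_Icc, Finset.sum_Ico_succ_top h]
  congr 1
  · refine Finset.sum_congr rfl fun i hi => ?_
    simp only [Finset.mem_Ico] at hi
    simp only [pcond]
    rw [if_pos ⟨hi.1, hi.2⟩]
  · simp [pcond]

/-- Lower bound on the forward difference: `ΔT_c(n̂) ≥ 1 − Σ_{i=1}^{n̂} p_T(i) − c`.
In particular, if `Σ_{i=1}^{n̂} p_T(i) ≤ 1 − c` then `T_c(n̂+1) ≥ T_c(n̂)`. -/
theorem forward_difference_Tc_lower_bound (c : ℝ) (hc : c ∈ Set.Ioo (0 : ℝ) 1)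
    (pT : ℕ → ℝ) (hpT0 : pT 0 = 0) (hpos : ∀ i, 0 ≤ pT i) (hsum : HasSum pT 1) :
    ∀ nh : ℕ, 0 < nh →
      (1 - ∑ i ∈ Finset.Icc 1 nh, pT i - c ≤ Tc c pT (nh + 1) - Tc c pT nh) ∧
      ((∑ i ∈ Finset.Icc 1 nh, pT i ≤ 1 - c) → Tc c pT nh ≤ Tc c pT (nh + 1)) := by
  intro nh hn
  obtain ⟨hc0, hc1⟩ := hc
  have hn1 : (1 : ℕ) ≤ nh := hn
  have hNcast : (1 : ℝ) ≤ (nh : ℝ) := by exact_mod_cast hn1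
  set S := ∑ j ∈ Finset.Ico 1 nh, pT j with hSdef
  have hIcc : ∑ i ∈ Finset.Icc 1 nh, pT i = S + pT nh := by
    rw [← Finset.Ico_add_one_right_eq_Icc, Finset.sum_Ico_succ_top hn1]
  have hsum1 : ∑ j ∈ Finset.Ico 1 (nh + 1), pT j ≤ 1 :=
    sum_le_hasSum _ (fun i _ => hpos i) hsum
  have hS1 : S + pT nh ≤ 1 := by
    rw [Finset.sum_Ico_succ_top hn1] at hsum1; exact hsum1
  have hT1 : Tc c pT nh = (∑ i ∈ Finset.Ico 1 nh, max ((i : ℝ) - c * nh) 0 * pT i)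
      + ((nh : ℝ) - c * nh) * (1 - S) := by
    rw [Tc_eq c pT nh hn, max_eq_left (by nlinarith)]
  have hT2 : Tc c pT (nh + 1) = (∑ i ∈ Finset.Ico 1 nh, max ((i : ℝ) - c * ((nh : ℝ) + 1)) 0 * pT i)
      + max ((nh : ℝ) - c * ((nh : ℝ) + 1)) 0 * pT nh
      + (((nh : ℝ) + 1) - c * ((nh : ℝ) + 1)) * (1 - (S + pT nh)) := by
    rw [Tc_eq c pT (nh + 1) (by omega), Finset.sum_Ico_succ_top hn1,
        Finset.sum_Ico_succ_top hn1]
    push_cast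
    rw [show ((nh : ℝ) + 1 - c * ((nh : ℝ) + 1)) ⊔ 0 = (nh : ℝ) + 1 - c * ((nh : ℝ) + 1) from
      max_eq_left (by nlinarith [Nat.cast_nonneg (α := ℝ) nh])]
  have hA : (∑ i ∈ Finset.Ico 1 nh, max ((i : ℝ) - c * nh) 0 * pT i) - c * S ≤
      ∑ i ∈ Finset.Ico 1 nh, max ((i : ℝ) - c * ((nh : ℝ) + 1)) 0 * pT i := by
    rw [hSdef, Finset.mul_sum, ← Finset.sum_sub_distrib]
    refine Finset.sum_le_sum fun i hi => ?_
    have hx : (i : ℝ) - c * ((nh : ℝ) + 1) = ((i : ℝ) - c * nh) - c := by ring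
    rw [hx, ← sub_mul]
    exact mul_le_mul_of_nonneg_right (max_sub_le _ _ hc0.le) (hpos i)
  have hM : ((nh : ℝ) - c * nh - c) * pT nh ≤ max ((nh : ℝ) - c * ((nh : ℝ) + 1)) 0 * pT nh := by
    refine mul_le_mul_of_nonneg_right ?_ (hpos nh)
    have := le_max_left ((nh : ℝ) - c * ((nh : ℝ) + 1)) 0
    linarith [this, show (nh : ℝ) - c * ((nh : ℝ) + 1) = (nh : ℝ) - c * nh - c from by ring]
  have hring : ((∑ i ∈ Finset.Ico 1 nh, max ((i : ℝ) - c * nh) 0 * pT i) - c * S)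
      + ((nh : ℝ) - c * nh - c) * pT nh
      + (((nh : ℝ) + 1) - c * ((nh : ℝ) + 1)) * (1 - (S + pT nh))
      - ((∑ i ∈ Finset.Ico 1 nh, max ((i : ℝ) - c * nh) 0 * pT i)
        + ((nh : ℝ) - c * nh) * (1 - S)) = 1 - (S + pT nh) - c := by ring
  have key : 1 - ∑ i ∈ Finset.Icc 1 nh, pT i - c ≤ Tc c pT (nh + 1) - Tc c pT nh := by
    rw [hIcc, hT1, hT2]
    linarith
  exact ⟨key, fun h => by rw [hIcc] at h; linarith [key, hIcc ▸ h]⟩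
end
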